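/- Let A be an abelian group, B a torsion-free divisible abelian group (hence uniquely divisible) with an additive involution σ, and Φ : A → B, Ψ : B → A group homomorphisms satisfying Ψ ∘ Φ = −2·id_A and Φ ∘ Ψ = σ − id_B. Then: (1) ker Φ = A[2] = {a ∈ A : 2a = 0}; (2) the image of Φ equals Pr(B, σ) = (σ − 1)B = {b ∈ B : σb = −b}; (3) the map s : Pr(B, σ) → A defined by s(b) = Ψ(−b/2), where −b/2 is the unique element of B with 2·(−b/2) = −b, is a group homomorphism with Φ ∘ s = id, and A is the internal direct sum A = s(Pr(B, σ)) ⊕ A[2]. In particular A ≅ Pr(B, σ) ⊕ A[2] with Φ corresponding to the projection onto the first factor. -/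

import Mathlib

/-- Let `A` be an abelian group, `B` a torsion-free divisible abelian
group with an additive involution `σ`, and `Φ : A → B`, `Ψ : B → A` group homomorphisms
with `Ψ ∘ Φ = −2·id` and `Φ ∘ Ψ = σ − id`.  Then
(1) `ker Φ = A[2]`;
(2) the image of `Φ` equals `Pr(B, σ) = (σ − 1)B = {b : σb = −b}`;
(3) the map `s : Pr(B, σ) → A`, `s(b) = Ψ(−b/2)`, is a group homomorphism with
    `Φ ∘ s = id`, and `A` is the internal direct sum `s(Pr(B, σ)) ⊕ A[2]`,
so that `A ≅ Pr(B, σ) ⊕ A[2]` with `Φ` corresponding to the first projection. -/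
theorem chow_group_prym_decomposition
    {A B : Type*} [AddCommGroup A] [AddCommGroup B]
    (htf : ∀ (n : ℤ) (b : B), n • b = 0 → n = 0 ∨ b = 0)
    (hdiv : ∀ (n : ℤ) (b : B), n ≠ 0 → ∃ c : B, n • c = b)
    (σ : AddMonoid.End B) (hσ : σ * σ = 1)
    (Φ : A →+ B) (Ψ : B →+ A)
    (hΨΦ : ∀ a : A, Ψ (Φ a) = -(2 • a))
    (hΦΨ : ∀ b : B, Φ (Ψ b) = σ b - b) :
    (∀ a : A, Φ a = 0 ↔ 2 • a = 0) ∧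
    (Φ.range = AddMonoidHom.range (σ - 1 : AddMonoid.End B) ∧
      ∀ b : B, b ∈ AddMonoidHom.range (σ - 1 : AddMonoid.End B) ↔ σ b = -b) ∧
    (∃ s : (AddMonoidHom.range (σ - 1 : AddMonoid.End B)) →+ A,
      (∀ (y : (AddMonoidHom.range (σ - 1 : AddMonoid.End B))) (c : B),
        2 • c = -(y : B) → s y = Ψ c) ∧
      (∀ y, Φ (s y) = (y : B)) ∧
      (∀ a : A, ∃ y t, 2 • t = 0 ∧ a = s y + t) ∧
      (∀ a : A, (∃ y, s y = a) → 2 • a = 0 → a = 0)) := by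
  -- basic facts
  have hσapp : ∀ b : B, σ (σ b) = b := by
    intro b
    have := DFunLike.congr_fun hσ b
    simpa using this
  have tf2 : ∀ b : B, b + b = 0 → b = 0 := by
    intro b h
    rcases htf 2 b (by rw [two_smul]; exact h) with h2 | h2
    · norm_num at h2
    · exact h2
  have cancel2 : ∀ b c : B, b + b = c + c → b = c := by
    intro b c h
    have : (b - c) + (b - c) = 0 := by abel_nf; abel_nf at h; linear_combination (norm := abel1) h
    have := tf2 _ this
    exact sub_eq_zero.mp this
  have half_ex : ∀ b : B, ∃ c : B, c + c = b := by
    intro b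
    obtain ⟨c, hc⟩ := hdiv 2 b (by norm_num)
    exact ⟨c, by rw [← two_smul ℤ]; exact hc⟩
  choose half hhalf using half_ex
  have key : ∀ b : B, σ b = -b → σ (half (-b)) - half (-b) = b := by
    intro b h
    apply cancel2
    have hσc : σ (half (-b)) + σ (half (-b)) = b := by
      rw [← map_add, hhalf, map_neg, h, neg_neg]
    calc (σ (half (-b)) - half (-b)) + (σ (half (-b)) - half (-b))
        = (σ (half (-b)) + σ (half (-b))) - (half (-b) + half (-b)) := by abel
      _ = b - (-b) := by rw [hσc, hhalf]
      _ = b + b := by abel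
  -- (1)
  have hker : ∀ a : A, Φ a = 0 ↔ 2 • a = 0 := by
    intro a
    constructor
    · intro h
      have h1 := hΨΦ a
      rw [h, map_zero] at h1
      exact neg_eq_zero.mp h1.symm
    · intro h
      have h1 : Φ a + Φ a = 0 := by
        rw [← map_add, ← two_smul ℕ a, h, map_zero]
      exact tf2 _ h1
  -- characterization of the Prym part
  have hsub : ∀ b : B, (σ - 1 : AddMonoid.End B) b = σ b - b := fun b => rfl
  have hchar : ∀ b : B, b ∈ AddMonoidHom.range (σ - 1 : AddMonoid.End B) ↔ σ b = -b := by
    intro b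
    constructor
    · rintro ⟨c, rfl⟩
      show σ (σ c - c) = -(σ c - c)
      rw [map_sub, hσapp]
      abel
    · intro h
      exact ⟨half (-b), by show σ (half (-b)) - half (-b) = b; exact key b h⟩
  have hσΦ : ∀ a : A, σ (Φ a) = -(Φ a) := by
    intro a
    have h1 : Φ (Ψ (Φ a)) = σ (Φ a) - Φ a := hΦΨ (Φ a)
    have h2 : Φ (Ψ (Φ a)) = -(Φ a + Φ a) := by
      rw [hΨΦ a, map_neg, ← map_add, ← two_smul ℕ a]
    have h3 : σ (Φ a) - Φ a = -(Φ a + Φ a) := by rw [← h1, h2]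
    have h4 : σ (Φ a) = -(Φ a + Φ a) + Φ a := by rw [← h3]; abel
    rw [h4]; abel
  have hrange : Φ.range = AddMonoidHom.range (σ - 1 : AddMonoid.End B) := by
    ext b
    rw [hchar]
    constructor
    · rintro ⟨a, rfl⟩
      exact hσΦ a
    · intro h
      exact ⟨Ψ (half (-b)), by rw [hΦΨ]; exact key b h⟩
  -- the section s
  set P := AddMonoidHom.range (σ - 1 : AddMonoid.End B) with hP
  have hadd : ∀ y z : P, half (-((y : B) + z)) = half (-(y : B)) + half (-(z : B)) := by
    intro y z
    apply cancel2
    rw [hhalf]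
    calc -((y : B) + z) = -(y : B) + -(z : B) := by abel
      _ = (half (-(y:B)) + half (-(y:B))) + (half (-(z:B)) + half (-(z:B))) := by
          rw [hhalf, hhalf]
      _ = (half (-(y:B)) + half (-(z:B))) + (half (-(y:B)) + half (-(z:B))) := by abel
  let s : P →+ A := AddMonoidHom.mk' (fun y => Ψ (half (-(y : B)))) (by
    intro y z
    push_cast
    rw [hadd y z, map_add])
  have hs_spec : ∀ (y : P) (c : B), 2 • c = -(y : B) → s y = Ψ c := by
    intro y c hc
    have h1 : c = half (-(y : B)) := by
      apply cancel2
      rw [hhalf, ← hc, two_smul]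
    show Ψ (half (-(y : B))) = Ψ c
    rw [h1]
  have hΦs : ∀ y : P, Φ (s y) = (y : B) := by
    intro y
    show Φ (Ψ (half (-(y : B)))) = (y : B)
    rw [hΦΨ]
    exact key (y : B) ((hchar _).mp y.2)
  refine ⟨hker, ⟨hrange, hchar⟩, s, hs_spec, hΦs, ?_, ?_⟩
  · intro a
    have hya : Φ a ∈ P := by rw [← hrange]; exact ⟨a, rfl⟩
    refine ⟨⟨Φ a, hya⟩, a - s ⟨Φ a, hya⟩, ?_, by abel⟩
    rw [← hker, map_sub, hΦs]
    simp
  · rintro a ⟨y, rfl⟩ h2a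
    have h0 : Φ (s y) = 0 := (hker _).mpr h2a
    rw [hΦs] at h0
    have hy0 : y = 0 := Subtype.ext (by simpa using h0)
    rw [hy0, map_zero]
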